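/- For the cycle C_n (n ≥ 3): st_id(C_n) = 1 if n ≡ 1 (mod 3), st_id(C_n) = 2 if n ≡ 2 (mod 3), and st_id(C_n) = 3 if n ≡ 0 (mod 3). -/

import Mathlib

open SimpleGraph

/-- `S` is an independent dominating set of `G`. -/
def SimpleGraph.IsIndepDomSet {V : Type*} (G : SimpleGraph V) (S : Set V) : Prop :=
  (S.Pairwise fun u v => ¬ G.Adj u v) ∧ ∀ v ∉ S, ∃ u ∈ S, G.Adj v u

/-- The independent domination number `γᵢ(G)`. -/
noncomputable def indepDomNum (V : Type*) [Fintype V] (G : SimpleGraph V) : ℕ :=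
  sInf {n | ∃ S : Finset V, G.IsIndepDomSet ↑S ∧ S.card = n}

/-- The independent domination stability `st_id(G)`: the minimum number of
vertices whose removal changes the independent domination number. -/
noncomputable def idStability (V : Type*) [Fintype V] [DecidableEq V]
    (G : SimpleGraph V) : ℕ :=
  sInf {k | ∃ A : Finset V, A.card = k ∧ A.Nonempty ∧
    indepDomNum _ (G.induce (↑(Aᶜ) : Set V)) ≠ indepDomNum V G}

set_option linter.unusedSectionVars false


lemma cycle_adj_iff {n : ℕ} (hn : 3 ≤ n) (u v : Fin n) :
    (cycleGraph n).Adj u v ↔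
      (u.val + 1 = v.val ∨ v.val + 1 = u.val ∨
       (u.val = 0 ∧ v.val + 1 = n) ∨ (v.val = 0 ∧ u.val + 1 = n)) := by
  rw [cycleGraph_adj']
  have hu := u.isLt
  have hv := v.isLt
  rw [Fin.sub_def, Fin.sub_def]
  simp only
  constructor
  · rintro (h | h)
    · rcases Nat.lt_or_ge u.val v.val with hlt | hge
      · have : (n - v.val + u.val) < n := by omega
        rw [Nat.mod_eq_of_lt this] at h
        omega
      · have : (n - v.val + u.val) = (u.val - v.val) + n := by omega
        rw [this, Nat.add_mod_right, Nat.mod_eq_of_lt (by omega)] at h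
        omega
    · rcases Nat.lt_or_ge v.val u.val with hlt | hge
      · have : (n - u.val + v.val) < n := by omega
        rw [Nat.mod_eq_of_lt this] at h
        omega
      · have : (n - u.val + v.val) = (v.val - u.val) + n := by omega
        rw [this, Nat.add_mod_right, Nat.mod_eq_of_lt (by omega)] at h
        omega
  · rintro (h | h | ⟨h1, h2⟩ | ⟨h1, h2⟩)
    · right; rw [show (n - u.val + v.val) = 1 + n by omega, Nat.add_mod_right,
        Nat.mod_eq_of_lt (by omega)]
    · left; rw [show (n - v.val + u.val) = 1 + n by omega, Nat.add_mod_right,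
        Nat.mod_eq_of_lt (by omega)]
    · left; rw [show (n - v.val + u.val) = 1 by omega, Nat.mod_eq_of_lt (by omega)]
    · right; rw [show (n - u.val + v.val) = 1 by omega, Nat.mod_eq_of_lt (by omega)]


variable {V W : Type*} [Fintype V] [Fintype W] {G : SimpleGraph V} {H : SimpleGraph W}

lemma isIndepDomSet_map (e : G ≃g H) (S : Finset V) [DecidableEq W]
    (h : G.IsIndepDomSet ↑S) : H.IsIndepDomSet ↑(S.image e) := by
  obtain ⟨hind, hdom⟩ := h
  constructor
  · rintro x hx y hy hxy
    simp only [Finset.coe_image, Set.mem_image, Finset.mem_coe] at hx hy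
    obtain ⟨a, ha, rfl⟩ := hx
    obtain ⟨b, hb, rfl⟩ := hy
    rw [e.map_adj_iff]
    exact hind ha hb (fun hab => hxy (by rw [hab]))
  · intro w hw
    have hv : e.symm w ∉ (S : Set V) := by
      intro hv
      apply hw
      simp only [Finset.coe_image, Set.mem_image, Finset.mem_coe]
      exact ⟨e.symm w, hv, by simp⟩
    obtain ⟨u, hu, hadj⟩ := hdom _ hv
    refine ⟨e u, ?_, ?_⟩
    · simp only [Finset.coe_image, Set.mem_image, Finset.mem_coe]
      exact ⟨u, hu, rfl⟩
    · have := e.map_adj_iff.mpr hadj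
      simpa using this

lemma indepDomNum_congr (e : G ≃g H) : indepDomNum V G = indepDomNum W H := by
  classical
  unfold indepDomNum
  congr 1
  ext k
  constructor
  · rintro ⟨S, hS, rfl⟩
    exact ⟨S.image e, isIndepDomSet_map e S hS,
      Finset.card_image_of_injective _ e.toEquiv.injective⟩
  · rintro ⟨S, hS, rfl⟩
    exact ⟨S.image e.symm, isIndepDomSet_map e.symm S hS,
      Finset.card_image_of_injective _ e.symm.toEquiv.injective⟩

def induceIsoOfIso (e : G ≃g H) (s : Set V) (t : Set W) (h : ∀ x, x ∈ s ↔ e x ∈ t) :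
    G.induce s ≃g H.induce t where
  toEquiv := Equiv.subtypeEquiv e.toEquiv h
  map_rel_iff' := by
    intro a b
    simp only [Equiv.subtypeEquiv, Equiv.coe_fn_mk, comap_adj, Function.Embedding.coe_subtype]
    exact e.map_adj_iff



lemma exists_isIndepDomSet {V : Type*} [Fintype V] (G : SimpleGraph V) :
    ∃ S : Finset V, G.IsIndepDomSet ↑S := by
  classical
  obtain ⟨S, hSindep, hSmax⟩ := by
    apply Finset.exists_max_image (Finset.univ.filter
      (fun S : Finset V => (S : Set V).Pairwise fun u v => ¬ G.Adj u v)) Finset.card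
    exact ⟨∅, by simp [Set.Pairwise]⟩
  simp only [Finset.mem_filter, Finset.mem_univ, true_and] at hSindep hSmax
  refine ⟨S, hSindep, ?_⟩
  intro v hv
  by_contra hcon
  push_neg at hcon
  have hSv : ((insert v S : Finset V) : Set V).Pairwise fun u w => ¬ G.Adj u w := by
    intro x hx y hy hxy
    simp only [Finset.coe_insert, Set.mem_insert_iff, Finset.mem_coe] at hx hy
    rcases hx with rfl | hx
    · rcases hy with rfl | hy
      · exact absurd rfl hxy
      · exact hcon y hy
    · rcases hy with rfl | hy
      · intro hadj; exact hcon x hx hadj.symm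
      · exact hSindep hx hy hxy
  have h1 := hSmax _ hSv
  have h2 : S.card < (insert v S).card := by
    rw [Finset.card_insert_of_notMem (by simpa using hv)]; omega
  omega

lemma indepDomNum_le {V : Type*} [Fintype V] {G : SimpleGraph V} {S : Finset V} {m : ℕ}
    (h : G.IsIndepDomSet ↑S) (hc : S.card ≤ m) : indepDomNum V G ≤ m :=
  le_trans (Nat.sInf_le ⟨S, h, rfl⟩) hc

lemma le_indepDomNum {V : Type*} [Fintype V] {G : SimpleGraph V} {m : ℕ}
    (h : ∀ S : Finset V, G.IsIndepDomSet ↑S → m ≤ S.card) : m ≤ indepDomNum V G := by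
  classical
  apply le_csInf
  · obtain ⟨S, hS⟩ := exists_isIndepDomSet G
    exact ⟨S.card, S, hS, rfl⟩
  · rintro b ⟨S, hS, rfl⟩
    exact h S hS

def adjVal (n i j : ℕ) : Prop :=
  i + 1 = j ∨ j + 1 = i ∨ (i = 0 ∧ j + 1 = n) ∨ (j = 0 ∧ i + 1 = n)

instance (n i j : ℕ) : Decidable (adjVal n i j) := by unfold adjVal; infer_instance

lemma cycle_adj_iff' {n : ℕ} (hn : 3 ≤ n) (u v : Fin n) :
    (cycleGraph n).Adj u v ↔ adjVal n u.val v.val := cycle_adj_iff hn u v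

lemma fin_eq_add_one_of_sub_val_one {n : ℕ} (hn : 3 ≤ n) [NeZero n] {a b : Fin n}
    (h : (a - b).val = 1) : a = b + 1 := by
  have h1 : (1 : Fin n).val = 1 := by
    rw [Fin.val_one']
    exact Nat.mod_eq_of_lt (by omega)
  have h2 : a - b = 1 := Fin.ext (by rw [h, h1])
  rw [sub_eq_iff_eq_add] at h2
  exact h2.trans (add_comm 1 b)

lemma cycle_induce_lower {n : ℕ} (hn : 3 ≤ n) (s : Set (Fin n)) [Fintype s]
    (S : Finset s) (h : ((cycleGraph n).induce s).IsIndepDomSet ↑S) :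
    Fintype.card s ≤ 3 * S.card := by
  classical
  haveI : NeZero n := ⟨by omega⟩
  set N : s → Finset s := fun u => Finset.univ.filter
    (fun v => (v : Fin n) = (u : Fin n) - 1 ∨ (v : Fin n) = (u : Fin n) ∨
      (v : Fin n) = (u : Fin n) + 1) with hN
  have hcover : (Finset.univ : Finset s) ⊆ S.biUnion N := by
    intro v _
    rw [Finset.mem_biUnion]
    by_cases hv : v ∈ S
    · exact ⟨v, hv, by simp [hN]⟩
    · obtain ⟨u, hu, hadj⟩ := h.2 v (by simpa using hv)
      refine ⟨u, by simpa using hu, ?_⟩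
      simp only [hN, Finset.mem_filter, Finset.mem_univ, true_and]
      have hadj' : (cycleGraph n).Adj (v : Fin n) (u : Fin n) := hadj
      rw [cycleGraph_adj'] at hadj'
      rcases hadj' with h1 | h1
      · right; right; exact fin_eq_add_one_of_sub_val_one hn h1
      · left
        have := fin_eq_add_one_of_sub_val_one hn h1
        rw [this, eq_sub_iff_add_eq]
  have hNcard : ∀ u : s, (N u).card ≤ 3 := by
    intro u
    have h3 : (N u).card ≤ ({(u : Fin n) - 1, (u : Fin n), (u : Fin n) + 1} :
        Finset (Fin n)).card := by
      refine Finset.card_le_card_of_injOn (fun v => (v : Fin n)) ?_ ?_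
      · intro v hv
        simp only [hN, Finset.mem_coe, Finset.mem_filter, Finset.mem_univ, true_and] at hv
        simp only [Finset.mem_coe, Finset.mem_insert, Finset.mem_singleton]
        tauto
      · exact fun a _ b _ hab => Subtype.val_injective hab
    refine le_trans h3 ?_
    refine le_trans (Finset.card_insert_le _ _) ?_
    refine Nat.succ_le_succ ?_
    refine le_trans (Finset.card_insert_le _ _) ?_
    simp
  calc Fintype.card s = (Finset.univ : Finset s).card := rfl
    _ ≤ (S.biUnion N).card := Finset.card_le_card hcover
    _ ≤ ∑ u ∈ S, (N u).card := Finset.card_biUnion_le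
    _ ≤ ∑ _u ∈ S, 3 := Finset.sum_le_sum (fun u _ => hNcard u)
    _ = 3 * S.card := by rw [Finset.sum_const]; ring

lemma cycle_induce_upper {n : ℕ} (hn : 3 ≤ n) (s : Set (Fin n)) [Fintype s]
    (P : ℕ → Prop) [DecidablePred P] (m : ℕ)
    (hmem : ∀ i : Fin n, P i.val → i ∈ s)
    (hind : ∀ i j : ℕ, i < n → j < n → P i → P j → i ≠ j → ¬ adjVal n i j)
    (hdom : ∀ i : Fin n, i ∈ s → ¬ P i.val → ∃ j, j < n ∧ P j ∧ adjVal n i.val j)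
    (f : ℕ → ℕ)
    (hb : ∀ i, i < n → P i → f i < m)
    (hinj : ∀ i j, i < n → j < n → P i → P j → f i = f j → i = j) :
    indepDomNum s ((cycleGraph n).induce s) ≤ m := by
  classical
  set S : Finset s := Finset.univ.filter (fun x => P (x : Fin n).val) with hS
  have hmemS : ∀ x : s, x ∈ S ↔ P (x : Fin n).val := by
    intro x; simp [hS]
  apply indepDomNum_le (S := S)
  · constructor
    · intro x hx y hy hxy
      rw [Finset.mem_coe, hmemS] at hx hy
      intro hadj
      have hadj' : (cycleGraph n).Adj (x : Fin n) (y : Fin n) := hadj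
      have hval : ((x : Fin n)).val ≠ ((y : Fin n)).val :=
        fun h => hxy (Subtype.ext (Fin.ext h))
      exact hind _ _ (x : Fin n).isLt (y : Fin n).isLt hx hy hval
        ((cycle_adj_iff' hn _ _).mp hadj')
    · intro v hv
      rw [Finset.mem_coe, hmemS] at hv
      obtain ⟨j, hj, hPj, hadj⟩ := hdom v v.2 hv
      refine ⟨⟨⟨j, hj⟩, hmem _ hPj⟩, ?_, ?_⟩
      · rw [Finset.mem_coe, hmemS]; exact hPj
      · exact (cycle_adj_iff' hn _ _).mpr hadj
  · calc S.card ≤ (Finset.range m).card := by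
          refine Finset.card_le_card_of_injOn (fun x => f (x : Fin n).val) ?_ ?_
          · intro x hx
            rw [Finset.mem_coe, hmemS] at hx
            simp only [Finset.mem_coe, Finset.mem_range]
            exact hb _ (x : Fin n).isLt hx
          · intro x hx y hy hfxy
            rw [Finset.mem_coe, hmemS] at hx hy
            exact Subtype.ext (Fin.ext (hinj _ _ (x : Fin n).isLt (y : Fin n).isLt hx hy hfxy))
      _ = m := Finset.card_range m

def rotIso (n : ℕ) [NeZero n] (c : Fin n) : cycleGraph n ≃g cycleGraph n where
  toEquiv := Equiv.subRight c
  map_rel_iff' := by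
    intro a b
    simp only [Equiv.subRight_apply]
    rw [cycleGraph_adj', cycleGraph_adj', sub_sub_sub_cancel_right, sub_sub_sub_cancel_right]

example (n : ℕ) [NeZero n] (c : Fin n) (x : Fin n) : (rotIso n c) x = x - c := rfl

lemma cycle_idn (n : ℕ) (hn : 3 ≤ n) :
    indepDomNum (Fin n) (cycleGraph n) = (n + 2) / 3 := by
  haveI : NeZero n := ⟨by omega⟩
  rw [← indepDomNum_congr (induceUnivIso (cycleGraph n))]
  apply le_antisymm
  · apply cycle_induce_upper hn Set.univ
      (fun i => (i % 3 = 0 ∧ (n % 3 = 1 → i + 1 ≠ n)) ∨ (n % 3 = 1 ∧ i + 2 = n)) ((n + 2) / 3)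
      (fun i _ => trivial)
      (fun i j hi hj hPi hPj hne => by unfold adjVal; omega)
      (fun i _ hP => ?_)
      (fun i => if n % 3 = 1 ∧ i + 2 = n then (n - 1) / 3 else i / 3)
      (fun i hi hPi => by split_ifs <;> omega)
      (fun i j hi hj hPi hPj hf => by split_ifs at hf <;> omega)
    have hvlt := i.isLt
    by_cases h1 : i.val % 3 = 1
    · exact ⟨i.val - 1, by omega, Or.inl ⟨by omega, by omega⟩, by unfold adjVal; omega⟩
    by_cases h2 : i.val % 3 = 2
    · by_cases h3 : i.val + 1 = n
      · exact ⟨0, by omega, Or.inl ⟨by omega, by omega⟩, by unfold adjVal; omega⟩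
      · by_cases h4 : n % 3 = 1 ∧ i.val + 2 = n
        · exact absurd (Or.inr h4) hP
        · exact ⟨i.val + 1, by omega, Or.inl ⟨by omega, by omega⟩, by unfold adjVal; omega⟩
    · exact ⟨i.val - 1, by omega, Or.inr (by omega), by unfold adjVal; omega⟩
  · apply le_indepDomNum
    intro S hS
    have h1 := cycle_induce_lower hn Set.univ S hS
    have h2 : Fintype.card (Set.univ : Set (Fin n)) = n :=
      (Fintype.card_congr (Equiv.Set.univ (Fin n))).trans (Fintype.card_fin n)
    omega

lemma card_coe_compl {n : ℕ} (A : Finset (Fin n)) :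
    Fintype.card (↑(Aᶜ) : Set (Fin n)) = n - A.card := by
  have h1 : Fintype.card (↑(Aᶜ) : Set (Fin n)) = Fintype.card ↥(Aᶜ) :=
    Fintype.card_congr (Equiv.subtypeEquivRight (fun x => by simp))
  rw [h1, Fintype.card_coe, Finset.card_compl, Fintype.card_fin]

lemma mem_compl_singleton_iff {n : ℕ} [NeZero n] (v : Fin n) (x : Fin n) :
    x ∈ (↑(({v} : Finset (Fin n))ᶜ) : Set (Fin n)) ↔ x.val ≠ v.val := by
  simp [Fin.ext_iff]

lemma idn_del_zero (n : ℕ) [NeZero n] (hn : 3 ≤ n) :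
    indepDomNum _ ((cycleGraph n).induce (↑(({0} : Finset (Fin n))ᶜ) : Set (Fin n)))
      = (n + 1) / 3 := by
  apply le_antisymm
  · apply cycle_induce_upper hn _
      (fun i => i % 3 = 2 ∨ (n % 3 = 2 ∧ i + 1 = n)) ((n + 1) / 3)
      (fun i hPi => by
        rw [mem_compl_singleton_iff]
        simp only [Fin.val_zero]
        omega)
      (fun i j hi hj hPi hPj hne => by unfold adjVal; omega)
      (fun i hi hP => ?_)
      (fun i => if n % 3 = 2 ∧ i + 1 = n then n / 3 else i / 3)
      (fun i hi hPi => by split_ifs <;> omega)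
      (fun i j hi hj hPi hPj hf => by split_ifs at hf <;> omega)
    have hvlt := i.isLt
    rw [mem_compl_singleton_iff] at hi
    simp only [Fin.val_zero] at hi
    by_cases h1 : i.val % 3 = 0
    · exact ⟨i.val - 1, by omega, Or.inl (by omega), by unfold adjVal; omega⟩
    by_cases h2 : i.val % 3 = 1
    · by_cases h3 : i.val + 1 = n
      · exact absurd (Or.inr ⟨by omega, h3⟩) hP
      · exact ⟨i.val + 1, by omega, Or.inl (by omega), by unfold adjVal; omega⟩
    · exact absurd (Or.inl (by omega)) hP
  · apply le_indepDomNum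
    intro S hS
    have h1 := cycle_induce_lower hn _ S hS
    have h2 := card_coe_compl ({0} : Finset (Fin n))
    rw [Finset.card_singleton] at h2
    omega

lemma idn_del_congr {n : ℕ} (hn : 3 ≤ n) (c : Fin n) (A B : Finset (Fin n))
    (h : ∀ x : Fin n, x ∈ A ↔ x - c ∈ B) :
    indepDomNum _ ((cycleGraph n).induce (↑(Aᶜ) : Set (Fin n)))
      = indepDomNum _ ((cycleGraph n).induce (↑(Bᶜ) : Set (Fin n))) := by
  haveI : NeZero n := ⟨by omega⟩
  exact indepDomNum_congr (induceIsoOfIso (rotIso n c) _ _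
    (fun x => by simp only [Finset.coe_compl, Set.mem_compl_iff, Finset.mem_coe]; exact not_congr (h x)))

lemma idn_del_card_one {n : ℕ} (hn : 3 ≤ n) (A : Finset (Fin n)) (hA : A.card = 1) :
    indepDomNum _ ((cycleGraph n).induce (↑(Aᶜ) : Set (Fin n))) = (n + 1) / 3 := by
  haveI : NeZero n := ⟨by omega⟩
  obtain ⟨v, rfl⟩ := Finset.card_eq_one.mp hA
  rw [idn_del_congr hn v {v} {0} (fun x => by simp [sub_eq_zero])]
  exact idn_del_zero n hn

lemma mem_compl_pair_iff {n : ℕ} [NeZero n] (d : Fin n) (x : Fin n) :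
    x ∈ (↑(({0, d} : Finset (Fin n))ᶜ) : Set (Fin n)) ↔ x.val ≠ 0 ∧ x.val ≠ d.val := by
  simp only [Finset.coe_compl, Set.mem_compl_iff, Finset.mem_coe, Finset.mem_insert,
    Finset.mem_singleton, not_or, Fin.ext_iff, Fin.val_zero, ne_eq]

lemma idn_del_pair_zero (n : ℕ) [NeZero n] (hn : 3 ≤ n) (h0 : n % 3 = 0)
    (d : Fin n) (hd : d ≠ 0) :
    indepDomNum _ ((cycleGraph n).induce (↑(({0, d} : Finset (Fin n))ᶜ) : Set (Fin n)))
      = n / 3 := by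
  have hdn := d.isLt
  have hdv : d.val ≠ 0 := fun h => hd (Fin.ext (by simp [h]))
  apply le_antisymm
  · apply cycle_induce_upper hn _
      (fun i => (i < d.val ∧ i % 3 = 2) ∨ (i < d.val ∧ d.val % 3 = 2 ∧ i + 1 = d.val) ∨
        (d.val < i ∧ i % 3 = (d.val + 2) % 3) ∨ (d.val % 3 = 1 ∧ i + 1 = n)) (n / 3)
      (fun i hPi => by
        rw [mem_compl_pair_iff]
        omega)
      (fun i j hi hj hPi hPj hne => by unfold adjVal; omega)
      (fun i hi hP => ?_)
      (fun i => if d.val % 3 = 1 ∧ i + 1 = n then d.val / 3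
        else if d.val % 3 = 2 ∧ i + 1 = d.val then d.val / 3 else i / 3)
      (fun i hi hPi => by split_ifs <;> omega)
      (fun i j hi hj hPi hPj hf => by split_ifs at hf <;> omega)
    have hvlt := i.isLt
    rw [mem_compl_pair_iff] at hi
    obtain ⟨hv0, hvd⟩ := hi
    by_cases hlt : i.val < d.val
    · by_cases ha : i.val % 3 = 0
      · exact ⟨i.val - 1, by omega, Or.inl ⟨by omega, by omega⟩, by unfold adjVal; omega⟩
      by_cases hb1 : i.val % 3 = 1
      · by_cases hc : i.val + 1 < d.val
        · exact ⟨i.val + 1, by omega, Or.inl ⟨by omega, by omega⟩, by unfold adjVal; omega⟩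
        · exact absurd (Or.inr (Or.inl ⟨by omega, by omega, by omega⟩)) hP
      · exact absurd (Or.inl ⟨hlt, by omega⟩) hP
    · by_cases h2 : i.val % 3 = (d.val + 2) % 3
      · exact absurd (Or.inr (Or.inr (Or.inl ⟨by omega, h2⟩))) hP
      by_cases h3 : i.val % 3 = (d.val + 1) % 3
      · by_cases h4 : i.val + 1 < n
        · exact ⟨i.val + 1, by omega,
            Or.inr (Or.inr (Or.inl ⟨by omega, by omega⟩)), by unfold adjVal; omega⟩
        · exact absurd (Or.inr (Or.inr (Or.inr ⟨by omega, by omega⟩))) hP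
      · exact ⟨i.val - 1, by omega,
          Or.inr (Or.inr (Or.inl ⟨by omega, by omega⟩)), by unfold adjVal; omega⟩
  · apply le_indepDomNum
    intro S hS
    have h1 := cycle_induce_lower hn _ S hS
    have h2 := card_coe_compl ({0, d} : Finset (Fin n))
    have h3 : ({0, d} : Finset (Fin n)).card = 2 := by
      rw [Finset.card_insert_of_notMem (by simp [Ne.symm hd]), Finset.card_singleton]
    omega

lemma idn_del_card_two {n : ℕ} (hn : 3 ≤ n) (h0 : n % 3 = 0) (A : Finset (Fin n))
    (hA : A.card = 2) :
    indepDomNum _ ((cycleGraph n).induce (↑(Aᶜ) : Set (Fin n))) = n / 3 := by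
  haveI : NeZero n := ⟨by omega⟩
  obtain ⟨u, v, huv, rfl⟩ := Finset.card_eq_two.mp hA
  rw [idn_del_congr hn u {u, v} {0, v - u} (fun x => by
    simp only [Finset.mem_insert, Finset.mem_singleton, sub_eq_zero, sub_left_inj])]
  exact idn_del_pair_zero n hn h0 (v - u) (sub_ne_zero.mpr (Ne.symm huv))

lemma idn_del_three (n : ℕ) (hn : 3 ≤ n) (h0 : n % 3 = 0) :
    indepDomNum _ ((cycleGraph n).induce
      (↑(({⟨0, by omega⟩, ⟨1, by omega⟩, ⟨2, by omega⟩} : Finset (Fin n))ᶜ) : Set (Fin n)))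
      ≤ n / 3 - 1 := by
  have hmemiff : ∀ x : Fin n, x ∈ (↑(({⟨0, by omega⟩, ⟨1, by omega⟩, ⟨2, by omega⟩} :
      Finset (Fin n))ᶜ) : Set (Fin n)) ↔ (x.val ≠ 0 ∧ x.val ≠ 1 ∧ x.val ≠ 2) := by
    intro x
    simp [Fin.ext_iff, not_or]; tauto
  apply cycle_induce_upper hn _
    (fun i => i % 3 = 1 ∧ 4 ≤ i) (n / 3 - 1)
    (fun i hPi => by rw [hmemiff]; omega)
    (fun i j hi hj hPi hPj hne => by unfold adjVal; omega)
    (fun i hi hP => ?_)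
    (fun i => i / 3 - 1)
    (fun i hi hPi => by omega)
    (fun i j hi hj hPi hPj hf => by omega)
  have hvlt := i.isLt
  rw [hmemiff] at hi
  by_cases h1 : i.val % 3 = 0
  · exact ⟨i.val + 1, by omega, ⟨by omega, by omega⟩, by unfold adjVal; omega⟩
  by_cases h2 : i.val % 3 = 1
  · exact absurd ⟨h2, by omega⟩ hP
  · exact ⟨i.val - 1, by omega, ⟨by omega, by omega⟩, by unfold adjVal; omega⟩

lemma idn_del_pair01 (n : ℕ) (hn : 3 ≤ n) (h2 : n % 3 = 2) :
    indepDomNum _ ((cycleGraph n).induce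
      (↑(({⟨0, by omega⟩, ⟨1, by omega⟩} : Finset (Fin n))ᶜ) : Set (Fin n)))
      ≤ n / 3 := by
  have hmemiff : ∀ x : Fin n, x ∈ (↑(({⟨0, by omega⟩, ⟨1, by omega⟩} :
      Finset (Fin n))ᶜ) : Set (Fin n)) ↔ (x.val ≠ 0 ∧ x.val ≠ 1) := by
    intro x
    simp [Fin.ext_iff, not_or]; tauto
  apply cycle_induce_upper hn _
    (fun i => i % 3 = 0 ∧ 3 ≤ i) (n / 3)
    (fun i hPi => by rw [hmemiff]; omega)
    (fun i j hi hj hPi hPj hne => by unfold adjVal; omega)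
    (fun i hi hP => ?_)
    (fun i => i / 3 - 1)
    (fun i hi hPi => by omega)
    (fun i j hi hj hPi hPj hf => by omega)
  have hvlt := i.isLt
  rw [hmemiff] at hi
  by_cases h1 : i.val % 3 = 1
  · exact ⟨i.val - 1, by omega, ⟨by omega, by omega⟩, by unfold adjVal; omega⟩
  by_cases hb : i.val % 3 = 2
  · exact ⟨i.val + 1, by omega, ⟨by omega, by omega⟩, by unfold adjVal; omega⟩
  · exact absurd ⟨by omega, by omega⟩ hP


/-- For the cycle `C_n` (`n ≥ 3`): `st_id(C_n)` is 1, 2, or 3 according to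
whether `n` is ≡ 1, 2 or 0 modulo 3. -/
theorem stmt12 (n : ℕ) (hn : 3 ≤ n) :
    idStability _ (cycleGraph n) =
      if n % 3 = 1 then 1 else if n % 3 = 2 then 2 else 3 := by
  haveI : NeZero n := ⟨by omega⟩
  have hcyc := cycle_idn n hn
  unfold idStability
  by_cases hm1 : n % 3 = 1
  · rw [if_pos hm1]
    have hmem : 1 ∈ {k | ∃ A : Finset (Fin n), A.card = k ∧ A.Nonempty ∧
        indepDomNum _ ((cycleGraph n).induce (↑(Aᶜ) : Set (Fin n)))
          ≠ indepDomNum (Fin n) (cycleGraph n)} := by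
      refine ⟨{0}, Finset.card_singleton 0, ⟨0, Finset.mem_singleton_self 0⟩, ?_⟩
      rw [idn_del_card_one hn _ (Finset.card_singleton 0), hcyc]
      omega
    refine le_antisymm (Nat.sInf_le hmem) (le_csInf ⟨1, hmem⟩ ?_)
    rintro b ⟨A, hcard, hne, -⟩
    have := Finset.card_pos.mpr hne
    omega
  by_cases hm2 : n % 3 = 2
  · rw [if_neg hm1, if_pos hm2]
    have hmem : 2 ∈ {k | ∃ A : Finset (Fin n), A.card = k ∧ A.Nonempty ∧
        indepDomNum _ ((cycleGraph n).induce (↑(Aᶜ) : Set (Fin n)))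
          ≠ indepDomNum (Fin n) (cycleGraph n)} := by
      refine ⟨{⟨0, by omega⟩, ⟨1, by omega⟩}, ?_, ⟨_, Finset.mem_insert_self _ _⟩, ?_⟩
      · rw [Finset.card_insert_of_notMem (by simp [Fin.ext_iff]), Finset.card_singleton]
      · have hle := idn_del_pair01 n hn hm2
        rw [hcyc]
        omega
    refine le_antisymm (Nat.sInf_le hmem) (le_csInf ⟨2, hmem⟩ ?_)
    rintro b ⟨A, hcard, hne, hdiff⟩
    have h1 := Finset.card_pos.mpr hne
    rcases Nat.lt_or_ge b 2 with hb | hb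
    · exfalso
      have hb1 : A.card = 1 := by omega
      rw [idn_del_card_one hn A hb1, hcyc] at hdiff
      exact hdiff (by omega)
    · exact hb
  · have hm0 : n % 3 = 0 := by omega
    rw [if_neg hm1, if_neg hm2]
    have hmem : 3 ∈ {k | ∃ A : Finset (Fin n), A.card = k ∧ A.Nonempty ∧
        indepDomNum _ ((cycleGraph n).induce (↑(Aᶜ) : Set (Fin n)))
          ≠ indepDomNum (Fin n) (cycleGraph n)} := by
      refine ⟨{⟨0, by omega⟩, ⟨1, by omega⟩, ⟨2, by omega⟩}, ?_,
        ⟨_, Finset.mem_insert_self _ _⟩, ?_⟩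
      · rw [Finset.card_insert_of_notMem (by simp [Fin.ext_iff]),
          Finset.card_insert_of_notMem (by simp [Fin.ext_iff]), Finset.card_singleton]
      · have hle := idn_del_three n hn hm0
        rw [hcyc]
        omega
    refine le_antisymm (Nat.sInf_le hmem) (le_csInf ⟨3, hmem⟩ ?_)
    rintro b ⟨A, hcard, hne, hdiff⟩
    have h1 := Finset.card_pos.mpr hne
    rcases Nat.lt_or_ge b 3 with hb | hb
    · exfalso
      rcases Nat.lt_or_ge b 2 with hb2 | hb2
      · have hb1 : A.card = 1 := by omega
        rw [idn_del_card_one hn A hb1, hcyc] at hdiff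
        exact hdiff (by omega)
      · have hb1 : A.card = 2 := by omega
        rw [idn_del_card_two hn hm0 A hb1, hcyc] at hdiff
        exact hdiff (by omega)
    · exact hb
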